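/- Let X, Y be Polish spaces and c : X × Y → [0,∞] Borel measurable. Let Γ ⊆ X × Y be c-monotone with c finite on Γ, and assume (Γ,c) is connecting. Fix (x₀,y₀) ∈ Γ and define φ(x) = inf over n ≥ 1 and (x₁,y₁),…,(xₙ,yₙ) ∈ Γ of (c(x,yₙ) − c(xₙ,yₙ)) + ∑_{i=0}^{n-1} (c(x_{i+1},yᵢ) − c(xᵢ,yᵢ)). Then φ is finite (real-valued) on the projection p_X[Γ], and moreover φ(x) ≤ φ(x') + c(x,y) − c(x',y) for all x ∈ X and all (x',y) ∈ Γ. -/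

import Mathlib

open MeasureTheory Set
open scoped ENNReal

noncomputable section

def IsCoupling {X Y : Type*} [MeasurableSpace X] [MeasurableSpace Y]
    (μ : Measure X) (ν : Measure Y) (π : Measure (X × Y)) : Prop :=
  π.map Prod.fst = μ ∧ π.map Prod.snd = ν

def CMonotoneSet {X Y : Type*} (c : X × Y → ℝ≥0∞) (Γ : Set (X × Y)) : Prop :=
  ∀ (n : ℕ) (f : Fin (n + 1) → X × Y), (∀ i, f i ∈ Γ) →
    ∑ i, c (f i) ≤ ∑ i, c ((f i).1, (f (i + 1)).2)

def ChainLe {X Y : Type*} (c : X × Y → ℝ≥0∞) (Γ : Set (X × Y)) (p q : X × Y) : Prop :=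
  ∃ (n : ℕ) (g : Fin (n + 1) → X × Y), (∀ i, g i ∈ Γ) ∧ g 0 = p ∧ g (Fin.last n) = q ∧
    ∀ i : Fin n, c ((g i.succ).1, (g i.castSucc).2) < ⊤

def ChainEquiv {X Y : Type*} (c : X × Y → ℝ≥0∞) (Γ : Set (X × Y)) (p q : X × Y) : Prop :=
  ChainLe c Γ p q ∧ ChainLe c Γ q p

def Connecting {X Y : Type*} (c : X × Y → ℝ≥0∞) (Γ : Set (X × Y)) : Prop :=
  (∀ p ∈ Γ, c p < ⊤) ∧ ∀ p ∈ Γ, ∀ q ∈ Γ, ChainEquiv c Γ p q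

noncomputable def ruPhi {X Y : Type*} (c : X × Y → ℝ≥0∞) (Γ : Set (X × Y))
    (p₀ : X × Y) (x : X) : EReal :=
  sInf { r : EReal | ∃ (n : ℕ) (g : Fin (n + 1) → X × Y), 1 ≤ n ∧ g 0 = p₀ ∧
    (∀ i, g i ∈ Γ) ∧
    r = ((c (x, (g (Fin.last n)).2)).toEReal - (c (g (Fin.last n))).toEReal) +
      ∑ i : Fin n, ((c ((g i.succ).1, (g i.castSucc).2)).toEReal -
        (c (g i.castSucc)).toEReal) }

section RuAux

lemma ru_coe_fin (a : ℝ≥0∞) (ha : a ≠ ⊤) : a.toEReal = ((a.toReal : ℝ) : EReal) := by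
  rw [← EReal.toReal_coe_ennreal (x := a)]
  exact (EReal.coe_toReal (by simpa using ha) (EReal.coe_ennreal_ne_bot a)).symm

lemma ru_sub_coe (a b : ℝ≥0∞) (ha : a ≠ ⊤) (hb : b ≠ ⊤) :
    a.toEReal - b.toEReal = ((a.toReal - b.toReal : ℝ) : EReal) := by
  rw [ru_coe_fin a ha, ru_coe_fin b hb, EReal.coe_sub]

lemma ru_sub_ne_bot (a b : ℝ≥0∞) (hb : b ≠ ⊤) : a.toEReal - b.toEReal ≠ ⊥ := by
  rcases eq_or_ne a ⊤ with rfl | ha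
  · rw [ru_coe_fin b hb]; simp [EReal.coe_ennreal_top, EReal.top_sub_coe]
  · rw [ru_sub_coe a b ha hb]; exact EReal.coe_ne_bot _

lemma ru_sub_add_sub (a₁ b₁ a₂ b₂ : ℝ≥0∞) (hb₁ : b₁ ≠ ⊤) (hb₂ : b₂ ≠ ⊤) :
    (a₁.toEReal - b₁.toEReal) + (a₂.toEReal - b₂.toEReal)
      = (a₁ + a₂).toEReal - (b₁ + b₂).toEReal := by
  rcases eq_or_ne a₁ ⊤ with rfl | ha₁
  · rw [ru_coe_fin b₁ hb₁, top_add, EReal.coe_ennreal_top, EReal.top_sub_coe,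
      ru_coe_fin (b₁ + b₂) (by simp [hb₁, hb₂]), EReal.top_sub_coe,
      EReal.top_add_of_ne_bot (ru_sub_ne_bot _ _ hb₂)]
  rcases eq_or_ne a₂ ⊤ with rfl | ha₂
  · rw [ru_coe_fin b₂ hb₂, add_top, EReal.coe_ennreal_top, EReal.top_sub_coe,
      ru_coe_fin (b₁ + b₂) (by simp [hb₁, hb₂]), EReal.top_sub_coe,
      EReal.add_top_of_ne_bot (ru_sub_ne_bot _ _ hb₁)]
  · rw [ru_sub_coe a₁ b₁ ha₁ hb₁, ru_sub_coe a₂ b₂ ha₂ hb₂,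
      ru_sub_coe _ _ (by simp [ha₁, ha₂]) (by simp [hb₁, hb₂]),
      ENNReal.toReal_add ha₁ ha₂, ENNReal.toReal_add hb₁ hb₂, ← EReal.coe_add]
    norm_cast
    ring

lemma ru_sum_sub {ι : Type*} [DecidableEq ι] (s : Finset ι) (a b : ι → ℝ≥0∞) (hb : ∀ i ∈ s, b i ≠ ⊤) :
    ∑ i ∈ s, ((a i).toEReal - (b i).toEReal)
      = (∑ i ∈ s, a i).toEReal - (∑ i ∈ s, b i).toEReal := by
  induction s using Finset.induction with
  | empty => simp
  | insert j s' hni ih =>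
    rw [Finset.sum_insert hni, Finset.sum_insert hni, Finset.sum_insert hni,
      ih (fun i hi => hb i (Finset.mem_insert_of_mem hi)),
      ru_sub_add_sub _ _ _ _ (hb j (Finset.mem_insert_self j s'))
        (by exact (ENNReal.sum_lt_top.2 (fun i hi => lt_top_iff_ne_top.2
          (hb i (Finset.mem_insert_of_mem hi)))).ne)]

lemma ru_neg_le_sub (A B E : ℝ≥0∞) (hB : B ≠ ⊤) (hE : E ≠ ⊤) (h : B ≤ A + E) :
    -(E.toEReal) ≤ A.toEReal - B.toEReal := by
  rcases eq_or_ne A ⊤ with rfl | hA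
  · rw [ru_coe_fin B hB, EReal.coe_ennreal_top, EReal.top_sub_coe]; exact le_top
  · rw [ru_sub_coe A B hA hB, ru_coe_fin E hE, ← EReal.coe_neg, EReal.coe_le_coe_iff]
    have h' : B.toReal ≤ A.toReal + E.toReal := by
      rw [← ENNReal.toReal_add hA hE]
      exact ENNReal.toReal_mono (by simp [hA, hE]) h
    linarith

lemma ru_rev_mono {X Y : Type*} (c : X × Y → ℝ≥0∞) (Γ : Set (X × Y))
    (hmono : CMonotoneSet c Γ) (N : ℕ) (f : Fin (N + 1) → X × Y)
    (hf : ∀ i, f i ∈ Γ) :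
    ∑ i, c (f i) ≤ ∑ i, c ((f (i + 1)).1, (f i).2) := by
  have key := hmono N (fun i => f (-1 - i)) (fun i => hf _)
  have e1 : Function.Involutive (fun j : Fin (N + 1) => -1 - j) := by
    intro j; simp only; open Fin.CommRing in ring
  have e2 : Function.Involutive (fun j : Fin (N + 1) => -2 - j) := by
    intro j; simp only; open Fin.CommRing in ring
  have h1 : ∑ i, c (f (-1 - i)) = ∑ i, c (f i) := by
    refine Fintype.sum_equiv e1.toPerm _ _ (fun j => ?_)
    simp only [Function.Involutive.coe_toPerm]
  have h2 : (∑ i : Fin (N+1), c ((f (-1 - i)).1, (f (-1 - (i + 1))).2))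
      = ∑ j, c ((f (j + 1)).1, (f j).2) := by
    refine Fintype.sum_equiv e2.toPerm _ _ (fun j => ?_)
    simp only [Function.Involutive.coe_toPerm]
    have b1 : (-2 - j + 1 : Fin (N+1)) = -1 - j := by open Fin.CommRing in ring
    have b2 : (-1 - (j + 1) : Fin (N+1)) = -2 - j := by open Fin.CommRing in ring
    rw [b1, b2]
  calc ∑ i, c (f i) = ∑ i, c (f (-1 - i)) := h1.symm
    _ ≤ ∑ i : Fin (N+1), c ((f (-1 - i)).1, (f (-1 - (i + 1))).2) := key
    _ = ∑ j, c ((f (j + 1)).1, (f j).2) := h2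

lemma ru_cyc {X Y : Type*} (c : X × Y → ℝ≥0∞) (Γ : Set (X × Y))
    (hmono : CMonotoneSet c Γ) (N : ℕ) (w : ℕ → X × Y)
    (hw : ∀ k ≤ N, w k ∈ Γ) (hclose : w (N + 1) = w 0) :
    ∑ k ∈ Finset.range (N + 1), c (w k) ≤ ∑ k ∈ Finset.range (N + 1), c ((w (k + 1)).1, (w k).2) := by
  have key := ru_rev_mono c Γ hmono N (fun i => w ↑i) (fun i => hw _ (Nat.lt_succ_iff.1 i.isLt))
  have hstep : ∀ i : Fin (N + 1), (fun i : Fin (N+1) => w ↑i) (i + 1) = w (↑i + 1) := by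
    intro i
    rcases eq_or_ne i (Fin.last N) with rfl | h
    · simp only [Fin.last_add_one, Fin.val_zero, Fin.val_last]
      rw [← hclose]
    · simp only
      congr 1
      rw [Fin.val_add_one]
      simp [h]
  calc ∑ k ∈ Finset.range (N + 1), c (w k)
      = ∑ i : Fin (N + 1), c (w ↑i) := (Fin.sum_univ_eq_sum_range (fun k => c (w k)) (N+1)).symm
    _ ≤ ∑ i : Fin (N+1), c (((fun i : Fin (N+1) => w ↑i) (i + 1)).1, (w ↑i).2) := key
    _ = ∑ i : Fin (N+1), c ((w (↑i + 1)).1, (w ↑i).2) := by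
        refine Finset.sum_congr rfl (fun i _ => ?_); rw [hstep i]
    _ = ∑ k ∈ Finset.range (N + 1), c ((w (k + 1)).1, (w k).2) :=
        Fin.sum_univ_eq_sum_range (fun k => c ((w (k + 1)).1, (w k).2)) (N+1)

lemma ru_lb {X Y : Type*} (c : X × Y → ℝ≥0∞) (Γ : Set (X × Y))
    (hmono : CMonotoneSet c Γ) (hΓfin : ∀ p ∈ Γ, c p < ⊤)
    (p₀ : X × Y) (x : X) (y : Y) (hle : ChainLe c Γ (x, y) p₀) :
    ∃ E : EReal, E ≠ ⊥ ∧ E ≤ ruPhi c Γ p₀ x := by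
  obtain ⟨m, h, hhΓ, hh0, hhlast, hhedge⟩ := hle
  set E : ℝ≥0∞ := ∑ j : Fin m, c ((h j.succ).1, (h j.castSucc).2) with hEdef
  have hE : E ≠ ⊤ := (ENNReal.sum_lt_top.2 (fun j _ => hhedge j)).ne
  refine ⟨-(E.toEReal), by simp [EReal.neg_eq_bot_iff, hE], le_sInf ?_⟩
  rintro r ⟨n, g, hn, hg0, hgΓ, rfl⟩
  set A1 : ℝ≥0∞ := c (x, (g (Fin.last n)).2) with hA1
  set B1 : ℝ≥0∞ := c (g (Fin.last n)) with hB1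
  have hB1fin : B1 ≠ ⊤ := (hΓfin _ (hgΓ _)).ne
  have hbfin : ∀ i : Fin n, c (g i.castSucc) ≠ ⊤ := fun i => (hΓfin _ (hgΓ _)).ne
  rw [ru_sum_sub Finset.univ _ _ (fun i _ => hbfin i),
    ru_sub_add_sub _ _ _ _ hB1fin ((ENNReal.sum_lt_top.2 (fun i _ => (hΓfin _ (hgΓ _)))).ne)]
  refine ru_neg_le_sub _ _ _ (by
      exact (ENNReal.add_lt_top.2 ⟨hB1fin.lt_top, ENNReal.sum_lt_top.2
        (fun i _ => (hΓfin _ (hgΓ _)))⟩).ne) hE ?_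
  -- the cyclic inequality
  set w : ℕ → X × Y := fun k =>
    if hk : k ≤ n then g ⟨k, by omega⟩
    else if hk2 : k ≤ n + m then h ⟨k - (n + 1), by omega⟩ else p₀ with hwdef
  have hw_g : ∀ (k : ℕ) (hk : k ≤ n), w k = g ⟨k, by omega⟩ := fun k hk => dif_pos hk
  have hw_h : ∀ (j : ℕ) (hj : j ≤ m), w (n + 1 + j) = h ⟨j, by omega⟩ := by
    intro j hj
    rcases lt_or_eq_of_le hj with hj' | rfl
    · rw [hwdef]
      simp only
      rw [dif_neg (by omega), dif_pos (by omega)]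
      have e : n + 1 + j - (n + 1) = j := by omega
      simp only [e]
    · rw [hwdef]
      simp only
      rw [dif_neg (by omega), dif_neg (by omega), ← hhlast]
      congr 1
  have hw_mem : ∀ k ≤ n + m, w k ∈ Γ := by
    intro k hk
    by_cases hkn : k ≤ n
    · rw [hw_g k hkn]; exact hgΓ _
    · have hk' : k = n + 1 + (k - (n + 1)) := by omega
      rw [hk', hw_h _ (by omega)]; exact hhΓ _
  have hclose : w (n + m + 1) = w 0 := by
    have e1 : n + m + 1 = n + 1 + m := by omega
    rw [e1, hw_h m le_rfl, hw_g 0 (Nat.zero_le n)]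
    have e2 : (⟨m, by omega⟩ : Fin (m + 1)) = Fin.last m := Fin.ext rfl
    have e3 : (⟨0, by omega⟩ : Fin (n + 1)) = 0 := Fin.ext rfl
    rw [e2, e3, hhlast, hg0]
  have hcyc := ru_cyc c Γ hmono (n + m) w hw_mem hclose
  -- identify pieces
  have hL1 : ∑ k ∈ Finset.range (n + 1), c (w k) = B1 + ∑ i : Fin n, c (g i.castSucc) := by
    rw [← Fin.sum_univ_eq_sum_range (fun k => c (w k)) (n + 1)]
    have : ∀ i : Fin (n + 1), c (w ↑i) = c (g i) := by
      intro i
      rw [hw_g ↑i (Nat.lt_succ_iff.1 i.isLt)]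
    rw [Finset.sum_congr rfl (fun i _ => this i), Fin.sum_univ_castSucc, add_comm]
  have hR1 : ∑ k ∈ Finset.range n, c ((w (k + 1)).1, (w k).2)
      = ∑ i : Fin n, c ((g i.succ).1, (g i.castSucc).2) := by
    rw [← Fin.sum_univ_eq_sum_range (fun k => c ((w (k + 1)).1, (w k).2)) n]
    refine Finset.sum_congr rfl (fun i _ => ?_)
    have w1 : w (↑i + 1) = g i.succ := by
      rw [hw_g (↑i + 1) (by omega)]; exact congrArg g (Fin.ext rfl)
    have w2 : w ↑i = g i.castSucc := by
      rw [hw_g ↑i (by omega)]; exact congrArg g (Fin.ext rfl)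
    rw [w1, w2]
  have hR2 : c ((w (n + 1)).1, (w n).2) = A1 := by
    have w1 : w (n + 1) = (x, y) := by
      have : n + 1 = n + 1 + 0 := rfl
      rw [this, hw_h 0 (Nat.zero_le m)]
      have : (⟨0, by omega⟩ : Fin (m + 1)) = 0 := Fin.ext rfl
      rw [this, hh0]
    have w2 : w n = g (Fin.last n) := by
      rw [hw_g n le_rfl]; congr 1
    rw [w1, w2, hA1]
  have hR3 : ∑ k ∈ Finset.Ico (n + 1) (n + m + 1), c ((w (k + 1)).1, (w k).2) = E := by
    rw [Finset.sum_Ico_eq_sum_range]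
    have e1 : n + m + 1 - (n + 1) = m := by omega
    rw [e1, ← Fin.sum_univ_eq_sum_range (fun j => c ((w (n + 1 + j + 1)).1, (w (n + 1 + j)).2)) m,
      hEdef]
    refine Finset.sum_congr rfl (fun j _ => ?_)
    have w1 : w (n + 1 + ↑j + 1) = h j.succ := by
      have e2 : n + 1 + ↑j + 1 = n + 1 + (↑j + 1) := by omega
      rw [e2, hw_h (↑j + 1) (by omega)]; exact congrArg h (Fin.ext rfl)
    have w2 : w (n + 1 + ↑j) = h j.castSucc := by
      rw [hw_h ↑j (by omega)]; exact congrArg h (Fin.ext rfl)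
    rw [w1, w2]
  -- combine
  calc B1 + ∑ i : Fin n, c (g i.castSucc)
      = ∑ k ∈ Finset.range (n + 1), c (w k) := hL1.symm
    _ ≤ ∑ k ∈ Finset.range (n + m + 1), c (w k) :=
        Finset.sum_le_sum_of_subset (Finset.range_subset_range.2 (by omega))
    _ ≤ ∑ k ∈ Finset.range (n + m + 1), c ((w (k + 1)).1, (w k).2) := hcyc
    _ = ∑ k ∈ Finset.range (n + 1), c ((w (k + 1)).1, (w k).2)
        + ∑ k ∈ Finset.Ico (n + 1) (n + m + 1), c ((w (k + 1)).1, (w k).2) :=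
        (Finset.sum_range_add_sum_Ico _ (by omega)).symm
    _ = (A1 + ∑ i : Fin n, c ((g i.succ).1, (g i.castSucc).2)) + E := by
        rw [Finset.sum_range_succ, hR1, hR2, hR3, add_comm (∑ i : Fin n, _) A1]

lemma ru_ub {X Y : Type*} (c : X × Y → ℝ≥0∞) (Γ : Set (X × Y))
    (hΓfin : ∀ p ∈ Γ, c p < ⊤) (p₀ : X × Y) (hp₀ : p₀ ∈ Γ)
    (x : X) (y : Y) (hxy : (x, y) ∈ Γ) (hge : ChainLe c Γ p₀ (x, y)) :
    ruPhi c Γ p₀ x ≠ ⊤ := by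
  obtain ⟨n, g, hgΓ, hg0, hglast, hedge⟩ := hge
  set g' : Fin (n + 2) → X × Y := Fin.cons p₀ g with hg'def
  have hg'Γ : ∀ i, g' i ∈ Γ := by
    intro i
    refine Fin.cases ?_ (fun j => ?_) i
    · rw [hg'def, Fin.cons_zero]; exact hp₀
    · rw [hg'def, Fin.cons_succ]; exact hgΓ j
  have hg'0 : g' 0 = p₀ := Fin.cons_zero _ _
  have hg'last : g' (Fin.last (n + 1)) = (x, y) := by
    rw [← Fin.succ_last, hg'def, Fin.cons_succ, hglast]
  have hedge' : ∀ i : Fin (n + 1), c ((g' i.succ).1, (g' i.castSucc).2) ≠ ⊤ := by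
    intro i
    refine Fin.cases ?_ (fun j => ?_) i
    · have e1 : g' (Fin.succ 0) = g 0 := Fin.cons_succ _ _ _
      have e2 : g' (Fin.castSucc 0) = p₀ := by rw [Fin.castSucc_zero]; exact hg'0
      rw [e1, e2, hg0]
      exact (hΓfin p₀ hp₀).ne
    · have e1 : g' j.succ.succ = g j.succ := Fin.cons_succ _ _ _
      have e2 : g' j.succ.castSucc = g j.castSucc := by
        rw [← Fin.succ_castSucc]; exact Fin.cons_succ _ _ _
      rw [e1, e2]
      exact (hedge j).ne
  have hmem : ((c (x, (g' (Fin.last (n+1))).2)).toEReal - (c (g' (Fin.last (n+1)))).toEReal) +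
      ∑ i : Fin (n+1), ((c ((g' i.succ).1, (g' i.castSucc).2)).toEReal -
        (c (g' i.castSucc)).toEReal) ∈
      { r : EReal | ∃ (k : ℕ) (g₁ : Fin (k + 1) → X × Y), 1 ≤ k ∧ g₁ 0 = p₀ ∧
        (∀ i, g₁ i ∈ Γ) ∧
        r = ((c (x, (g₁ (Fin.last k)).2)).toEReal - (c (g₁ (Fin.last k))).toEReal) +
          ∑ i : Fin k, ((c ((g₁ i.succ).1, (g₁ i.castSucc).2)).toEReal -
            (c (g₁ i.castSucc)).toEReal) } :=
    ⟨n + 1, g', Nat.le_add_left 1 n, hg'0, hg'Γ, rfl⟩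
  have hle := sInf_le hmem
  have hfin : ((c (x, (g' (Fin.last (n+1))).2)).toEReal - (c (g' (Fin.last (n+1)))).toEReal) +
      ∑ i : Fin (n+1), ((c ((g' i.succ).1, (g' i.castSucc).2)).toEReal -
        (c (g' i.castSucc)).toEReal) ≠ ⊤ := by
    rw [ru_sum_sub Finset.univ _ _ (fun i _ => (hΓfin _ (hg'Γ _)).ne),
      ru_sub_add_sub _ _ _ _ (hΓfin _ (hg'Γ _)).ne
        ((ENNReal.sum_lt_top.2 (fun i _ => hΓfin _ (hg'Γ _))).ne),
      ru_sub_coe _ _ ?_ ?_]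
    · exact EReal.coe_ne_top _
    · rw [hg'last]
      refine (ENNReal.add_lt_top.2 ⟨?_, ENNReal.sum_lt_top.2 (fun i _ => (hedge' i).lt_top)⟩).ne
      exact hΓfin _ hxy
    · exact (ENNReal.add_lt_top.2 ⟨hΓfin _ (hg'Γ _),
        ENNReal.sum_lt_top.2 (fun i _ => hΓfin _ (hg'Γ _))⟩).ne
  intro htop
  rw [ruPhi] at htop
  rw [htop, top_le_iff] at hle
  exact hfin hle

lemma ru_ineq {X Y : Type*} (c : X × Y → ℝ≥0∞) (Γ : Set (X × Y))
    (hΓfin : ∀ p ∈ Γ, c p < ⊤) (p₀ : X × Y)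
    (x x' : X) (y : Y) (hx'y : (x', y) ∈ Γ) (hnb : ruPhi c Γ p₀ x' ≠ ⊥) :
    ruPhi c Γ p₀ x ≤ ruPhi c Γ p₀ x' + ((c (x, y)).toEReal - (c (x', y)).toEReal) := by
  have hcy : c (x', y) ≠ ⊤ := (hΓfin _ hx'y).ne
  set δ : EReal := (c (x, y)).toEReal - (c (x', y)).toEReal with hδ
  have key : ∀ r ∈ { r : EReal | ∃ (k : ℕ) (g₁ : Fin (k + 1) → X × Y), 1 ≤ k ∧ g₁ 0 = p₀ ∧
      (∀ i, g₁ i ∈ Γ) ∧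
      r = ((c (x', (g₁ (Fin.last k)).2)).toEReal - (c (g₁ (Fin.last k))).toEReal) +
        ∑ i : Fin k, ((c ((g₁ i.succ).1, (g₁ i.castSucc).2)).toEReal -
          (c (g₁ i.castSucc)).toEReal) }, ruPhi c Γ p₀ x ≤ r + δ := by
    rintro r ⟨n, g, hn, hg0, hgΓ, rfl⟩
    set g' : Fin (n + 2) → X × Y := Fin.snoc g (x', y) with hg'def
    have hg'Γ : ∀ i, g' i ∈ Γ := by
      intro i
      refine Fin.lastCases ?_ (fun j => ?_) i
      · rw [hg'def, Fin.snoc_last]; exact hx'y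
      · rw [hg'def, Fin.snoc_castSucc]; exact hgΓ j
    have hg'0 : g' 0 = p₀ := by
      rw [show (0 : Fin (n + 2)) = Fin.castSucc 0 from (Fin.castSucc_zero).symm,
        hg'def, Fin.snoc_castSucc, hg0]
    have hg'last : g' (Fin.last (n + 1)) = (x', y) := Fin.snoc_last _ _
    have hle : ruPhi c Γ p₀ x ≤
        ((c (x, (g' (Fin.last (n+1))).2)).toEReal - (c (g' (Fin.last (n+1)))).toEReal) +
        ∑ i : Fin (n+1), ((c ((g' i.succ).1, (g' i.castSucc).2)).toEReal -
          (c (g' i.castSucc)).toEReal) :=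
      sInf_le ⟨n + 1, g', Nat.le_add_left 1 n, hg'0, hg'Γ, rfl⟩
    refine hle.trans_eq ?_
    have hterm : ∀ i : Fin n,
        ((c ((g' i.castSucc.succ).1, (g' i.castSucc.castSucc).2)).toEReal -
          (c (g' i.castSucc.castSucc)).toEReal)
        = ((c ((g i.succ).1, (g i.castSucc).2)).toEReal - (c (g i.castSucc)).toEReal) := by
      intro i
      have e1 : g' i.castSucc.succ = g i.succ := by
        rw [Fin.succ_castSucc, hg'def, Fin.snoc_castSucc]
      have e2 : g' i.castSucc.castSucc = g i.castSucc := by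
        rw [hg'def]
        exact Fin.snoc_castSucc _ _ _
      rw [e1, e2]
    have hlastterm :
        ((c ((g' (Fin.last n).succ).1, (g' (Fin.last n).castSucc).2)).toEReal -
          (c (g' (Fin.last n).castSucc)).toEReal)
        = ((c (x', (g (Fin.last n)).2)).toEReal - (c (g (Fin.last n))).toEReal) := by
      have e1 : g' (Fin.last n).succ = (x', y) := by rw [Fin.succ_last]; exact hg'last
      have e2 : g' (Fin.last n).castSucc = g (Fin.last n) := by
        rw [hg'def]; exact Fin.snoc_castSucc _ _ _
      rw [e1, e2]
    rw [Fin.sum_univ_castSucc]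
    rw [Finset.sum_congr rfl (fun i _ => hterm i), hlastterm, hg'last]
    rw [hδ]
    rw [add_comm ((c (x, y)).toEReal - (c (x', y)).toEReal),
      add_comm (∑ i : Fin n, ((c ((g i.succ).1, (g i.castSucc).2)).toEReal -
        (c (g i.castSucc)).toEReal))
        ((c (x', (g (Fin.last n)).2)).toEReal - (c (g (Fin.last n))).toEReal)]
  rcases eq_or_ne (c (x, y)) ⊤ with htop | hfin
  · have hδtop : δ = ⊤ := by
      rw [hδ, htop, ru_coe_fin _ hcy, EReal.coe_ennreal_top, EReal.top_sub_coe]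
    rw [hδtop, EReal.add_top_of_ne_bot hnb]
    exact le_top
  · have hδcoe : δ = (((c (x, y)).toReal - (c (x', y)).toReal : ℝ) : EReal) :=
      ru_sub_coe _ _ hfin hcy
    have h1 : ruPhi c Γ p₀ x
        - (((c (x, y)).toReal - (c (x', y)).toReal : ℝ) : EReal) ≤ ruPhi c Γ p₀ x' := by
      refine le_sInf (fun r hr => ?_)
      rw [EReal.sub_le_iff_le_add (Or.inl (EReal.coe_ne_bot _)) (Or.inl (EReal.coe_ne_top _))]
      have := key r hr
      rw [hδcoe] at this
      exact this
    rw [hδcoe,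
      ← EReal.sub_le_iff_le_add (Or.inl (EReal.coe_ne_bot _)) (Or.inl (EReal.coe_ne_top _))]
    exact h1


end RuAux

theorem ruPhi_finite_and_ineq
    {X Y : Type*} [MeasurableSpace X] [TopologicalSpace X] [PolishSpace X] [BorelSpace X]
    [MeasurableSpace Y] [TopologicalSpace Y] [PolishSpace Y] [BorelSpace Y]
    (c : X × Y → ℝ≥0∞) (hc : Measurable c)
    (Γ : Set (X × Y)) (hmono : CMonotoneSet c Γ) (hΓfin : ∀ p ∈ Γ, c p < ⊤)
    (hconn : Connecting c Γ)
    (p₀ : X × Y) (hp₀ : p₀ ∈ Γ) :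
    (∀ x ∈ Prod.fst '' Γ, ruPhi c Γ p₀ x ≠ ⊤ ∧ ruPhi c Γ p₀ x ≠ ⊥) ∧
    (∀ (x x' : X) (y : Y), (x', y) ∈ Γ →
      ruPhi c Γ p₀ x ≤ ruPhi c Γ p₀ x' + ((c (x, y)).toEReal - (c (x', y)).toEReal)) := by
  have hlbne : ∀ (x' : X) (y : Y), (x', y) ∈ Γ → ruPhi c Γ p₀ x' ≠ ⊥ := by
    intro x' y hx'y
    obtain ⟨h1, h2⟩ := hconn.2 p₀ hp₀ (x', y) hx'y
    obtain ⟨E, hEne, hEle⟩ := ru_lb c Γ hmono hΓfin p₀ x' y h2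
    intro hbot
    rw [hbot] at hEle
    exact hEne (le_bot_iff.1 hEle)
  constructor
  · rintro x ⟨⟨x1, y⟩, hxy, rfl⟩
    obtain ⟨h1, h2⟩ := hconn.2 p₀ hp₀ (x1, y) hxy
    exact ⟨ru_ub c Γ hΓfin p₀ hp₀ x1 y hxy h1, hlbne x1 y hxy⟩
  · intro x x' y hx'y
    exact ru_ineq c Γ hΓfin p₀ x x' y hx'y (hlbne x' y hx'y)
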